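/- Let x, a, b, c, d, e be six points of the Euclidean plane in general position (pairwise distinct, no three collinear), and consider the seven segments of the bouquet configuration consisting of the triangle loop [x,a], [a,b], [b,x] and the quadrilateral loop [x,c], [c,d], [d,e], [e,x]. Then the number of crossing pairs — unordered pairs of two of these seven segments that share no endpoint and have nonempty intersection — is at most 7. -/

import Mathlib

/-- The closed segment spanned by a pair of points of the Euclidean plane. -/
def segOf (p : EuclideanSpace ℝ (Fin 2) × EuclideanSpace ℝ (Fin 2)) :
    Set (EuclideanSpace ℝ (Fin 2)) :=
  segment ℝ p.1 p.2

/-- Two segments (given by their endpoint pairs) share an endpoint. -/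
def SharesEndpoint (p q : EuclideanSpace ℝ (Fin 2) × EuclideanSpace ℝ (Fin 2)) : Prop :=
  p.1 = q.1 ∨ p.1 = q.2 ∨ p.2 = q.1 ∨ p.2 = q.2



noncomputable abbrev EPt := EuclideanSpace ℝ (Fin 2)

def det3 (p q r : EPt) : ℝ := (q 0 - p 0) * (r 1 - p 1) - (q 1 - p 1) * (r 0 - p 0)

lemma comb_apply (s t : ℝ) (u v : EPt) (i : Fin 2) :
    (s • u + t • v) i = s * u i + t * v i := by
  simp [PiLp.add_apply, PiLp.smul_apply, smul_eq_mul]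

lemma collinear_of_det3 {p q r : EPt} (h : det3 p q r = 0) : Collinear ℝ ({p, q, r} : Set EPt) := by
  by_cases hpq : q = p
  · rw [hpq, Set.insert_idem]
    exact collinear_pair ℝ p r
  · apply (collinear_iff_of_mem (Set.mem_insert p {q, r})).2
    refine ⟨q - p, ?_⟩
    intro w hw
    simp only [Set.mem_insert_iff, Set.mem_singleton_iff] at hw
    rcases hw with hw | hw | hw
    · exact ⟨0, by rw [hw]; simp⟩
    · exact ⟨1, by rw [hw]; simp⟩
    · by_cases h0 : q 0 - p 0 ≠ 0
      · refine ⟨(r 0 - p 0) / (q 0 - p 0), ?_⟩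
        rw [hw]
        apply PiLp.ext
        intro i
        fin_cases i
        · show r 0 = (r 0 - p 0) / (q 0 - p 0) * (q 0 - p 0) + p 0
          field_simp
          ring
        · show r 1 = (r 0 - p 0) / (q 0 - p 0) * (q 1 - p 1) + p 1
          unfold det3 at h
          field_simp
          first | linear_combination h | linear_combination -h
      · push_neg at h0
        have h1 : q 1 - p 1 ≠ 0 := by
          intro h1
          apply hpq
          apply PiLp.ext; intro i; fin_cases i
          · show q 0 = p 0; linarith
          · show q 1 = p 1; linarith
        refine ⟨(r 1 - p 1) / (q 1 - p 1), ?_⟩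
        rw [hw]
        apply PiLp.ext
        intro i
        fin_cases i
        · show r 0 = (r 1 - p 1) / (q 1 - p 1) * (q 0 - p 0) + p 0
          unfold det3 at h
          rw [h0] at h ⊢
          have h2 : (q 1 - p 1) * (r 0 - p 0) = 0 := by linarith
          rcases mul_eq_zero.1 h2 with h' | h'
          · exact absurd h' h1
          · simp only [mul_zero, zero_add]
            linarith
        · show r 1 = (r 1 - p 1) / (q 1 - p 1) * (q 1 - p 1) + p 1
          field_simp
          ring

lemma det3_of_mem_segment {u v p : EPt} (hp : p ∈ segment ℝ u v) : det3 u v p = 0 := by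
  obtain ⟨s, t, hs, ht, hst, rfl⟩ := hp
  unfold det3
  rw [comb_apply, comb_apply]
  have h1 : t = 1 - s := by linarith
  rw [h1]; ring

lemma det3_affine (u v q r : EPt) (s t : ℝ) (hst : s + t = 1) :
    det3 u v (s • q + t • r) = s * det3 u v q + t * det3 u v r := by
  unfold det3
  rw [comb_apply, comb_apply]
  have h1 : t = 1 - s := by linarith
  rw [h1]; ring

lemma det3_sign {u v q r : EPt} (h : (segment ℝ u v ∩ segment ℝ q r).Nonempty)
    (hq : ¬Collinear ℝ ({u, v, q} : Set EPt)) (hr : ¬Collinear ℝ ({u, v, r} : Set EPt)) :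
    det3 u v q * det3 u v r < 0 := by
  obtain ⟨p, hp1, hp2⟩ := h
  have h0 : det3 u v p = 0 := det3_of_mem_segment hp1
  obtain ⟨s, t, hs, ht, hst, hp⟩ := hp2
  rw [← hp, det3_affine u v q r s t hst] at h0
  have hq' : det3 u v q ≠ 0 := fun hh => hq (collinear_of_det3 hh)
  have hr' : det3 u v r ≠ 0 := fun hh => hr (collinear_of_det3 hh)
  rcases lt_trichotomy (det3 u v q * det3 u v r) 0 with h' | h' | h'
  · exact h'
  · exact absurd (mul_eq_zero.1 h') (by tauto)
  · exfalso
    rcases lt_trichotomy (det3 u v q) 0 with hQ | hQ | hQ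
    · have hR : det3 u v r < 0 := by nlinarith
      have h4 : s * det3 u v q ≤ 0 := mul_nonpos_of_nonneg_of_nonpos hs hQ.le
      have h5 : t * det3 u v r ≤ 0 := mul_nonpos_of_nonneg_of_nonpos ht hR.le
      have h6 : s * det3 u v q = 0 := by linarith
      have h7 : t * det3 u v r = 0 := by linarith
      rcases mul_eq_zero.1 h6 with h' | h'
      · rcases mul_eq_zero.1 h7 with h'' | h''
        · linarith
        · exact hr' h''
      · exact hq' h'
    · exact hq' hQ
    · have hR : 0 < det3 u v r := by nlinarith
      have h4 : 0 ≤ s * det3 u v q := mul_nonneg hs hQ.le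
      have h5 : 0 ≤ t * det3 u v r := mul_nonneg ht hR.le
      have h6 : s * det3 u v q = 0 := by linarith
      have h7 : t * det3 u v r = 0 := by linarith
      rcases mul_eq_zero.1 h6 with h' | h'
      · rcases mul_eq_zero.1 h7 with h'' | h''
        · linarith
        · exact hr' h''
      · exact hq' h'

lemma tri_contra {x a b u v : EPt}
    (nx : ¬Collinear ℝ ({u, v, x} : Set EPt)) (na : ¬Collinear ℝ ({u, v, a} : Set EPt))
    (nb : ¬Collinear ℝ ({u, v, b} : Set EPt))
    (h1 : (segment ℝ x a ∩ segment ℝ u v).Nonempty)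
    (h2 : (segment ℝ a b ∩ segment ℝ u v).Nonempty)
    (h3 : (segment ℝ b x ∩ segment ℝ u v).Nonempty) : False := by
  have s1 := det3_sign (by rwa [Set.inter_comm] at h1) nx na
  have s2 := det3_sign (by rwa [Set.inter_comm] at h2) na nb
  have s3 := det3_sign (by rwa [Set.inter_comm] at h3) nb nx
  nlinarith [sq_nonneg (det3 u v x * det3 u v a * det3 u v b), mul_pos_of_neg_of_neg s1 s2]

lemma quad_contra {x c d e : EPt}
    (n1 : ¬Collinear ℝ ({x, c, d} : Set EPt)) (n2 : ¬Collinear ℝ ({x, c, e} : Set EPt))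
    (n3 : ¬Collinear ℝ ({c, d, e} : Set EPt)) (n4 : ¬Collinear ℝ ({c, d, x} : Set EPt))
    (n5 : ¬Collinear ℝ ({e, x, c} : Set EPt)) (n6 : ¬Collinear ℝ ({e, x, d} : Set EPt))
    (h35 : (segment ℝ x c ∩ segment ℝ d e).Nonempty)
    (h46 : (segment ℝ c d ∩ segment ℝ e x).Nonempty) : False := by
  have s1 := det3_sign h35 n1 n2
  have s2 := det3_sign h46 n3 n4
  have s3 := det3_sign (by rwa [Set.inter_comm] at h46) n5 n6
  have e1 : det3 c d x = det3 x c d := by unfold det3; ring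
  have e2 : det3 e x c = det3 x c e := by unfold det3; ring
  have e3 : det3 e x d = det3 x d e := by unfold det3; ring
  have eId : det3 c d e = det3 x c d - det3 x c e + det3 x d e := by unfold det3; ring
  rw [e1, eId] at s2
  rw [e2, e3] at s3
  set P := det3 x c d
  set Q := det3 x c e
  set R := det3 x d e
  -- s1 : P*Q < 0, s2 : (P - Q + R)*P < 0, s3 : Q*R < 0
  nlinarith [mul_pos_of_neg_of_neg s1 s3, sq_nonneg Q, sq_nonneg P, mul_self_nonneg (P*Q)]

lemma miss3 {α : Type*} [DecidableEq α] {T : Set α} {C : Finset α} {a b c : α}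
    (hTC : ∀ x ∈ T, x ∈ C) (ha : a ∉ T) (hb : b ∉ T) (hc : c ∉ T)
    (hab : a ≠ b) (hac : a ≠ c) (hbc : b ≠ c)
    (haC : a ∈ C) (hbC : b ∈ C) (hcC : c ∈ C) : T.ncard + 3 ≤ C.card := by
  classical
  have hsub : T ⊆ ↑(((C.erase a).erase b).erase c) := by
    intro y hy
    exact Finset.mem_coe.2 (Finset.mem_erase.2 ⟨fun h => hc (h ▸ hy),
      Finset.mem_erase.2 ⟨fun h => hb (h ▸ hy),
        Finset.mem_erase.2 ⟨fun h => ha (h ▸ hy), hTC y hy⟩⟩⟩)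
  have h1 := Set.ncard_le_ncard hsub (Finset.finite_toSet _)
  rw [Set.ncard_coe_finset] at h1
  have hb' : b ∈ C.erase a := Finset.mem_erase.2 ⟨hab.symm, hbC⟩
  have hc' : c ∈ (C.erase a).erase b :=
    Finset.mem_erase.2 ⟨hbc.symm, Finset.mem_erase.2 ⟨hac.symm, hcC⟩⟩
  have e1 : (C.erase a).card = C.card - 1 := Finset.card_erase_of_mem haC
  have e2 : ((C.erase a).erase b).card = (C.erase a).card - 1 := Finset.card_erase_of_mem hb'
  have e3 : (((C.erase a).erase b).erase c).card = ((C.erase a).erase b).card - 1 :=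
    Finset.card_erase_of_mem hc'
  have p1 : 0 < (C.erase a).card := Finset.card_pos.2 ⟨b, hb'⟩
  have p2 : 0 < ((C.erase a).erase b).card := Finset.card_pos.2 ⟨c, hc'⟩
  have p3 : 0 < C.card := Finset.card_pos.2 ⟨a, haC⟩
  omega

def Cfin : Finset (Fin 7 × Fin 7) :=
  {(0,4),(0,5),(1,3),(1,4),(1,5),(1,6),(2,4),(2,5),(3,5),(4,6)}

/-- For six points `x, a, b, c, d, e` in general position in the plane, the seven segments of
the bouquet configuration (triangle loop `[x,a], [a,b], [b,x]` and quadrilateral loop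
`[x,c], [c,d], [d,e], [e,x]`) have at most 7 crossing pairs: unordered pairs of segments
sharing no endpoint and having nonempty intersection. -/
theorem bouquet_seven_sticks_crossings_le_seven
    (x a b c d e : EuclideanSpace ℝ (Fin 2))
    (hdist : ∀ i j : Fin 6, i ≠ j → ![x, a, b, c, d, e] i ≠ ![x, a, b, c, d, e] j)
    (hcol : ∀ i j k : Fin 6, i ≠ j → j ≠ k → i ≠ k →
      ¬ Collinear ℝ ({![x, a, b, c, d, e] i, ![x, a, b, c, d, e] j,
        ![x, a, b, c, d, e] k} : Set (EuclideanSpace ℝ (Fin 2)))) :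
    ({p : Fin 7 × Fin 7 | p.1 < p.2 ∧
        ¬ SharesEndpoint (![(x, a), (a, b), (b, x), (x, c), (c, d), (d, e), (e, x)] p.1)
          (![(x, a), (a, b), (b, x), (x, c), (c, d), (d, e), (e, x)] p.2) ∧
        (segOf (![(x, a), (a, b), (b, x), (x, c), (c, d), (d, e), (e, x)] p.1) ∩
          segOf (![(x, a), (a, b), (b, x), (x, c), (c, d), (d, e), (e, x)] p.2)).Nonempty}).ncard
      ≤ 7 := by
  classical
  set T : Set (Fin 7 × Fin 7) := {p : Fin 7 × Fin 7 | p.1 < p.2 ∧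
        ¬ SharesEndpoint (![(x, a), (a, b), (b, x), (x, c), (c, d), (d, e), (e, x)] p.1)
          (![(x, a), (a, b), (b, x), (x, c), (c, d), (d, e), (e, x)] p.2) ∧
        (segOf (![(x, a), (a, b), (b, x), (x, c), (c, d), (d, e), (e, x)] p.1) ∩
          segOf (![(x, a), (a, b), (b, x), (x, c), (c, d), (d, e), (e, x)] p.2)).Nonempty}
    with hTdef
  -- T is contained in the 10 candidate (non-adjacent, increasing) pairs
  have hTC : ∀ p ∈ T, p ∈ Cfin := by
    rintro ⟨i, j⟩ hp
    obtain ⟨h1, h2, -⟩ := hp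
    fin_cases i <;> fin_cases j <;>
      first
        | exact absurd h1 (by decide)
        | exact absurd (Or.inl rfl) h2
        | exact absurd (Or.inr (Or.inl rfl)) h2
        | exact absurd (Or.inr (Or.inr (Or.inl rfl))) h2
        | exact absurd (Or.inr (Or.inr (Or.inr rfl))) h2
        | decide
  -- the segment [c,d] cannot cross all three sides of the triangle
  have hm4 : ((0 : Fin 7), (4 : Fin 7)) ∉ T ∨ ((1 : Fin 7), (4 : Fin 7)) ∉ T ∨
      ((2 : Fin 7), (4 : Fin 7)) ∉ T := by
    by_contra hcon
    push_neg at hcon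
    obtain ⟨h04, h14, h24⟩ := hcon
    exact tri_contra (hcol 3 4 0 (by decide) (by decide) (by decide))
      (hcol 3 4 1 (by decide) (by decide) (by decide))
      (hcol 3 4 2 (by decide) (by decide) (by decide)) h04.2.2 h14.2.2 h24.2.2
  -- the segment [d,e] cannot cross all three sides of the triangle
  have hm5 : ((0 : Fin 7), (5 : Fin 7)) ∉ T ∨ ((1 : Fin 7), (5 : Fin 7)) ∉ T ∨
      ((2 : Fin 7), (5 : Fin 7)) ∉ T := by
    by_contra hcon
    push_neg at hcon
    obtain ⟨h05, h15, h25⟩ := hcon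
    exact tri_contra (hcol 4 5 0 (by decide) (by decide) (by decide))
      (hcol 4 5 1 (by decide) (by decide) (by decide))
      (hcol 4 5 2 (by decide) (by decide) (by decide)) h05.2.2 h15.2.2 h25.2.2
  -- the quadrilateral loop has at most one self-crossing
  have hmq : ((3 : Fin 7), (5 : Fin 7)) ∉ T ∨ ((4 : Fin 7), (6 : Fin 7)) ∉ T := by
    by_contra hcon
    push_neg at hcon
    obtain ⟨h35, h46⟩ := hcon
    exact quad_contra (hcol 0 3 4 (by decide) (by decide) (by decide))
      (hcol 0 3 5 (by decide) (by decide) (by decide))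
      (hcol 3 4 5 (by decide) (by decide) (by decide))
      (hcol 3 4 0 (by decide) (by decide) (by decide))
      (hcol 5 0 3 (by decide) (by decide) (by decide))
      (hcol 5 0 4 (by decide) (by decide) (by decide)) h35.2.2 h46.2.2
  have hC10 : Cfin.card = 10 := by decide
  rcases hm4 with hm1 | hm1 | hm1 <;> rcases hm5 with hm2 | hm2 | hm2 <;>
    rcases hmq with hm3 | hm3 <;>
  · have h := miss3 hTC hm1 hm2 hm3 (by decide) (by decide) (by decide)
      (by decide) (by decide) (by decide)
    omega
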